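/- arXiv:1807.03965 — 3 statements merged into one kernel-verified Lean document; each statement's English description precedes it below -/
import Mathlib

section
/- Suppose the automaton ℳ is alive. Then the constrained joint spectral radius of the constrained switching system equals the joint spectral radius of the lifted family: ρ(𝒜,ℳ) = ρ(𝒜_ℳ). -/
open Matrix Filter Kronecker

noncomputable section

/-- The product `A_{σ_{k-1}} ⋯ A_{σ_0}` for a word `σ = σ_0 … σ_{k-1}`. -/
def wordProd {m : ℕ} {N : Type*} [Fintype N] [DecidableEq N]
    (A : Fin m → Matrix N N ℝ) {k : ℕ} (σ : Fin k → Fin m) : Matrix N N ℝ :=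
  ((List.ofFn fun i => A (σ i)).reverse).prod

/-- The spectral radius: maximal modulus of a complex eigenvalue. -/
def specRad {N : Type*} [Fintype N] [DecidableEq N] (A : Matrix N N ℝ) : ℝ :=
  ⨆ μ ∈ ((A.map (Complex.ofReal ·)).charpoly.roots).toFinset, ‖μ‖

/-- `ν` is a sub-multiplicative matrix norm. -/
def IsSubmultNorm {N : Type*} [Fintype N] [DecidableEq N]
    (ν : Matrix N N ℝ → ℝ) : Prop :=
  (∀ S, 0 ≤ ν S) ∧ (∀ S, ν S = 0 ↔ S = 0) ∧
  (∀ (c : ℝ) (S), ν (c • S) = |c| * ν S) ∧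
  (∀ S T, ν (S + T) ≤ ν S + ν T) ∧
  (∀ S T, ν (S * T) ≤ ν S * ν T)

/-- Joint spectral radius. -/
def JSR {m : ℕ} {N : Type*} [Fintype N] [DecidableEq N]
    (ν : Matrix N N ℝ → ℝ) (A : Fin m → Matrix N N ℝ) : ℝ :=
  Filter.limsup
    (fun k : ℕ => (⨆ σ : Fin k → Fin m, ν (wordProd A σ)) ^ ((k : ℝ)⁻¹)) Filter.atTop

/-- Generalized spectral radius. -/
def GSR {m : ℕ} {N : Type*} [Fintype N] [DecidableEq N]
    (A : Fin m → Matrix N N ℝ) : ℝ :=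
  Filter.limsup
    (fun k : ℕ => (⨆ σ : Fin k → Fin m, specRad (wordProd A σ)) ^ ((k : ℝ)⁻¹)) Filter.atTop

/-- Constrained joint spectral radius. -/
def CJSR {n m ℓ : ℕ} (ν : Matrix (Fin n) (Fin n) ℝ → ℝ)
    (A : Fin m → Matrix (Fin n) (Fin n) ℝ)
    (F : Fin m → Matrix (Fin ℓ) (Fin ℓ) ℝ) : ℝ :=
  Filter.limsup
    (fun k : ℕ =>
      (⨆ σ : {σ : Fin k → Fin m // wordProd F σ ≠ 0}, ν (wordProd A σ.1)) ^ ((k : ℝ)⁻¹))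
    Filter.atTop

/-- Constrained generalized spectral radius. -/
def CGSR {n m ℓ : ℕ}
    (A : Fin m → Matrix (Fin n) (Fin n) ℝ)
    (F : Fin m → Matrix (Fin ℓ) (Fin ℓ) ℝ) : ℝ :=
  Filter.limsup
    (fun k : ℕ =>
      (⨆ σ : {σ : Fin k → Fin m // wordProd F σ ≠ 0}, specRad (wordProd A σ.1)) ^ ((k : ℝ)⁻¹))
    Filter.atTop

/-- The block norm `⦀S⦀ = max_j Σ_i ‖S_{ij}‖`. -/
def blockNorm {n ℓ : ℕ} (ν : Matrix (Fin n) (Fin n) ℝ → ℝ)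
    (S : Matrix (Fin ℓ × Fin n) (Fin ℓ × Fin n) ℝ) : ℝ :=
  ⨆ j : Fin ℓ, ∑ i : Fin ℓ, ν (Matrix.of fun a b => S (i, a) (j, b))

/-! ### Auxiliary lemmas -/

set_option linter.unusedSectionVars false

section WordProdAux

variable {m : ℕ} {N : Type*} [Fintype N] [DecidableEq N]

lemma wordProd_zero (A : Fin m → Matrix N N ℝ) (σ : Fin 0 → Fin m) : wordProd A σ = 1 := by
  simp [wordProd]

lemma wordProd_snoc (A : Fin m → Matrix N N ℝ) {k : ℕ} (σ : Fin k → Fin m) (i : Fin m) :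
    wordProd A (Fin.snoc σ i) = A i * wordProd A σ := by
  rw [wordProd, wordProd, List.ofFn_succ']
  simp only [Fin.snoc_castSucc, Fin.snoc_last, List.concat_eq_append, List.reverse_append,
    List.reverse_cons, List.reverse_nil, List.nil_append, List.singleton_append, List.prod_cons]

lemma wordProd_kron {m n ℓ : ℕ} (A : Fin m → Matrix (Fin n) (Fin n) ℝ)
    (F : Fin m → Matrix (Fin ℓ) (Fin ℓ) ℝ) {k : ℕ} (σ : Fin k → Fin m) :
    wordProd (fun i => F i ⊗ₖ A i) σ = wordProd F σ ⊗ₖ wordProd A σ := by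
  induction k with
  | zero => simp [wordProd_zero, Matrix.one_kronecker_one]
  | succ k ih =>
      rw [← Fin.snoc_init_self σ, wordProd_snoc, wordProd_snoc, wordProd_snoc,
        ih, Matrix.mul_kronecker_mul]

lemma wordProd_growth (ν : Matrix N N ℝ → ℝ) (h0 : ∀ S, 0 ≤ ν S)
    (hmul : ∀ S T, ν (S * T) ≤ ν S * ν T) (A : Fin m → Matrix N N ℝ) :
    ∀ {k : ℕ} (σ : Fin k → Fin m),
      ν (wordProd A σ) ≤ ν 1 * (1 + ∑ i, ν (A i)) ^ k := by
  intro k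
  set M := 1 + ∑ i, ν (A i) with hM
  have hM1 : 1 ≤ M := by
    have : (0:ℝ) ≤ ∑ i, ν (A i) := Finset.sum_nonneg fun i _ => h0 _
    simp only [hM]; linarith
  have hMi : ∀ i, ν (A i) ≤ M := by
    intro i
    have : ν (A i) ≤ ∑ j, ν (A j) :=
      Finset.single_le_sum (fun j _ => h0 _) (Finset.mem_univ i)
    simp only [hM]; linarith
  induction k with
  | zero => intro σ; rw [wordProd_zero]; simp
  | succ k ih =>
      intro σ
      rw [← Fin.snoc_init_self σ, wordProd_snoc]
      calc ν (A (σ (Fin.last k)) * wordProd A (Fin.init σ))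
          ≤ ν (A (σ (Fin.last k))) * ν (wordProd A (Fin.init σ)) := hmul _ _
        _ ≤ M * (ν 1 * M ^ k) := by
            apply mul_le_mul (hMi _) (ih _) (h0 _) (by linarith)
        _ = ν 1 * M ^ (k + 1) := by ring
end WordProdAux

/-! ### Structure of the automaton matrices -/

def Pstruct {ℓ : ℕ} (G : Matrix (Fin ℓ) (Fin ℓ) ℝ) : Prop :=
  (∀ s t, G s t = 0 ∨ G s t = 1) ∧ (∀ t s s', G s t ≠ 0 → G s' t ≠ 0 → s = s')

lemma Pstruct_one {ℓ : ℕ} : Pstruct (1 : Matrix (Fin ℓ) (Fin ℓ) ℝ) := by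
  constructor
  · intro s t
    by_cases h : s = t
    · subst h; right; simp [Matrix.one_apply_eq]
    · left; simp [Matrix.one_apply_ne h]
  · intro t s s' hs hs'
    by_cases h : s = t
    · by_cases h' : s' = t
      · rw [h, h']
      · exact absurd (Matrix.one_apply_ne h') hs'
    · exact absurd (Matrix.one_apply_ne h) hs

lemma Pstruct_mul {ℓ : ℕ} {G H : Matrix (Fin ℓ) (Fin ℓ) ℝ}
    (hG : Pstruct G) (hH : Pstruct H) : Pstruct (G * H) := by
  have key : ∀ s t, (G * H) s t = 0 ∨ ∃ u, H u t ≠ 0 ∧ (G * H) s t = G s u := by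
    intro s t
    by_cases h : ∃ u, H u t ≠ 0
    · obtain ⟨u, hu⟩ := h
      right
      have h1 : H u t = 1 := (hH.1 u t).resolve_left hu
      refine ⟨u, hu, ?_⟩
      have hsum : ∑ v, G s v * H v t = G s u * H u t := by
        refine Finset.sum_eq_single u (fun v _ hv => ?_) (fun hmem => absurd (Finset.mem_univ u) hmem)
        by_cases hv0 : H v t = 0
        · rw [hv0, mul_zero]
        · exact absurd (hH.2 t v u hv0 hu) hv
      rw [Matrix.mul_apply, hsum, h1, mul_one]
    · push_neg at h
      left
      rw [Matrix.mul_apply]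
      exact Finset.sum_eq_zero fun v _ => by rw [h v, mul_zero]
  constructor
  · intro s t
    rcases key s t with h | ⟨u, hu, h⟩
    · left; exact h
    · rw [h]
      rcases hH.1 u t with h' | h'
      · exact absurd h' hu
      · rcases hG.1 s u with h'' | h''
        · left; exact h''
        · right; exact h''
  · intro t s s' hs hs'
    rcases key s t with h | ⟨u, hu, h⟩
    · exact absurd h hs
    rcases key s' t with h' | ⟨u', hu', h'⟩
    · exact absurd h' hs'
    have : u = u' := hH.2 t u u' hu hu'
    subst this
    rw [h] at hs; rw [h'] at hs'
    exact hG.2 u s s' hs hs'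

section Alive
variable {m ℓ : ℕ} {F : Fin m → Matrix (Fin ℓ) (Fin ℓ) ℝ}

lemma Pstruct_wordProd (hF : ∀ i, Pstruct (F i)) {k : ℕ} (σ : Fin k → Fin m) :
    Pstruct (wordProd F σ) := by
  induction k with
  | zero => rw [wordProd_zero]; exact Pstruct_one
  | succ k ih =>
      rw [← Fin.snoc_init_self σ, wordProd_snoc]
      exact Pstruct_mul (hF _) (ih _)

lemma exists_accepted (hℓ : 0 < ℓ) (hF : ∀ i, Pstruct (F i))
    (halive : ∀ t : Fin ℓ, ∃ i : Fin m, ∃ s : Fin ℓ, F i s t ≠ 0) (k : ℕ) :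
    ∃ σ : Fin k → Fin m, wordProd F σ ≠ 0 := by
  have key : ∀ k, ∃ σ : Fin k → Fin m, ∃ s t, wordProd F σ s t ≠ 0 := by
    intro k
    induction k with
    | zero =>
        refine ⟨Fin.elim0, ⟨0, hℓ⟩, ⟨0, hℓ⟩, ?_⟩
        rw [wordProd_zero, Matrix.one_apply_eq]
        exact one_ne_zero
    | succ k ih =>
        obtain ⟨σ, s, t, hst⟩ := ih
        obtain ⟨i, s', hs'⟩ := halive s
        refine ⟨Fin.snoc σ i, s', t, ?_⟩
        rw [wordProd_snoc, Matrix.mul_apply]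
        have hpos : (0:ℝ) < ∑ u, F i s' u * wordProd F σ u t := by
          refine Finset.sum_pos' (fun u _ => ?_) ⟨s, Finset.mem_univ s, ?_⟩
          · have h1 := (hF i).1 s' u
            have h2 := (Pstruct_wordProd hF σ).1 u t
            rcases h1 with h1 | h1 <;> rcases h2 with h2 | h2 <;> simp [h1, h2]
          · rw [(hF i).1 s' s |>.resolve_left hs',
              ((Pstruct_wordProd hF σ).1 s t).resolve_left hst, one_mul]
            exact one_pos
        exact ne_of_gt hpos
  obtain ⟨σ, s, t, h⟩ := key k
  exact ⟨σ, fun h0 => h (by rw [h0]; rfl)⟩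
end Alive

/-! ### Norm equivalence -/

section NormEquiv
attribute [local instance] Matrix.normedAddCommGroup Matrix.normedSpace

variable {N : Type*} [Fintype N] [DecidableEq N] [Nonempty N]
  {ν : Matrix N N ℝ → ℝ}

structure NormAxioms (ν : Matrix N N ℝ → ℝ) : Prop where
  nonneg : ∀ S, 0 ≤ ν S
  eq_zero : ∀ S, ν S = 0 ↔ S = 0
  smul : ∀ (c : ℝ) S, ν (c • S) = |c| * ν S
  add_le : ∀ S T, ν (S + T) ≤ ν S + ν T

lemma NormAxioms.zero (h : NormAxioms ν) : ν 0 = 0 := (h.eq_zero 0).mpr rfl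

lemma NormAxioms.sum_le (h : NormAxioms ν) {ι : Type*} (s : Finset ι)
    (f : ι → Matrix N N ℝ) : ν (∑ i ∈ s, f i) ≤ ∑ i ∈ s, ν (f i) := by
  classical
  induction s using Finset.cons_induction with
  | empty => simp [h.zero]
  | cons a s ha ih =>
      rw [Finset.sum_cons, Finset.sum_cons]
      exact le_trans (h.add_le _ _) (add_le_add le_rfl ih)

lemma NormAxioms.exists_le_norm (h : NormAxioms ν) :
    ∃ c : ℝ, 0 < c ∧ ∀ S, ν S ≤ c * ‖S‖ := by
  classical
  refine ⟨(∑ p : N × N, ν (Matrix.single p.1 p.2 1)) + 1, ?_, ?_⟩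
  · have : (0:ℝ) ≤ ∑ p : N × N, ν (Matrix.single p.1 p.2 1) :=
      Finset.sum_nonneg fun p _ => h.nonneg _
    linarith
  · intro S
    have hrepr : S = ∑ p : N × N, (S p.1 p.2) • Matrix.single p.1 p.2 (1:ℝ) := by
      conv_lhs => rw [matrix_eq_sum_single S]
      rw [← Finset.sum_product']
      refine Finset.sum_congr rfl fun p _ => ?_
      rw [smul_single, smul_eq_mul, mul_one]
    calc ν S ≤ ∑ p : N × N, ν ((S p.1 p.2) • Matrix.single p.1 p.2 (1:ℝ)) := by
            nth_rewrite 1 [hrepr]; exact h.sum_le _ _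
      _ ≤ ∑ p : N × N, ‖S‖ * ν (Matrix.single p.1 p.2 (1:ℝ)) := by
            refine Finset.sum_le_sum fun p _ => ?_
            rw [h.smul]
            exact mul_le_mul_of_nonneg_right
              (S.norm_entry_le_entrywise_sup_norm (i := p.1) (j := p.2)) (h.nonneg _)
      _ = (∑ p : N × N, ν (Matrix.single p.1 p.2 1)) * ‖S‖ := by
            rw [Finset.sum_mul]; exact Finset.sum_congr rfl fun p _ => mul_comm _ _
      _ ≤ ((∑ p : N × N, ν (Matrix.single p.1 p.2 1)) + 1) * ‖S‖ := by
            have : (0:ℝ) ≤ ‖S‖ := norm_nonneg _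
            nlinarith

lemma NormAxioms.continuous (h : NormAxioms ν) : Continuous ν := by
  obtain ⟨c, hc, hle⟩ := h.exists_le_norm
  have lip : LipschitzWith c.toNNReal ν := by
    refine LipschitzWith.of_dist_le_mul fun x y => ?_
    have h1 : ν x - ν y ≤ ν (x - y) := by
      have := h.add_le (x - y) y
      simp only [sub_add_cancel] at this
      linarith
    have hneg : ν (x - y) = ν (y - x) := by
      have := h.smul (-1) (y - x)
      simpa [neg_sub] using this
    have h2 : ν y - ν x ≤ ν (x - y) := by
      have := h.add_le (y - x) x
      simp only [sub_add_cancel] at this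
      linarith
    have habs : dist (ν x) (ν y) ≤ ν (x - y) := by
      rw [Real.dist_eq]
      exact abs_sub_le_iff.mpr ⟨h1, h2⟩
    calc dist (ν x) (ν y) ≤ ν (x - y) := habs
      _ ≤ c * ‖x - y‖ := hle _
      _ = c.toNNReal * dist x y := by
          rw [dist_eq_norm, Real.coe_toNNReal c hc.le]
  exact lip.continuous

lemma NormAxioms.exists_norm_le (h : NormAxioms ν) :
    ∃ c : ℝ, 0 < c ∧ ∀ S, ‖S‖ ≤ c * ν S := by
  classical
  haveI : Nontrivial (Matrix N N ℝ) := by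
    refine ⟨1, 0, fun hco => ?_⟩
    have := congr_fun (congr_fun hco (Classical.arbitrary N)) (Classical.arbitrary N)
    rw [Matrix.one_apply_eq] at this
    exact (one_ne_zero : (1:ℝ) ≠ 0) (by simpa using this)
  have hne : (Metric.sphere (0 : Matrix N N ℝ) 1).Nonempty :=
    NormedSpace.sphere_nonempty.mpr zero_le_one
  obtain ⟨x0, hx0mem, hmin⟩ :=
    (isCompact_sphere (0 : Matrix N N ℝ) 1).exists_isMinOn hne h.continuous.continuousOn
  have hx0 : ‖x0‖ = 1 := by simpa using hx0mem
  have hx0ne : x0 ≠ 0 := by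
    intro h0; rw [h0, norm_zero] at hx0; exact one_ne_zero hx0.symm
  have hm0 : 0 < ν x0 := lt_of_le_of_ne (h.nonneg _)
    (fun heq => hx0ne ((h.eq_zero x0).mp heq.symm))
  refine ⟨(ν x0)⁻¹, inv_pos.mpr hm0, fun S => ?_⟩
  by_cases hS : S = 0
  · simp [hS, h.zero]
  · have hr : 0 < ‖S‖ := norm_pos_iff.mpr hS
    set u := ‖S‖⁻¹ • S with hu
    have humem : u ∈ Metric.sphere (0 : Matrix N N ℝ) 1 := by
      simp [hu, norm_smul, abs_of_pos (inv_pos.mpr hr), inv_mul_cancel₀ hr.ne']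
    have hνu : ν x0 ≤ ν u := hmin humem
    have : ν u = ‖S‖⁻¹ * ν S := by
      rw [hu, h.smul, abs_of_pos (inv_pos.mpr hr)]
    rw [this] at hνu
    have hkey : ‖S‖ * ν x0 ≤ ν S := by
      calc ‖S‖ * ν x0 ≤ ‖S‖ * (‖S‖⁻¹ * ν S) :=
            mul_le_mul_of_nonneg_left hνu hr.le
        _ = ν S := by field_simp
    rw [inv_mul_eq_div, le_div_iff₀ hm0]
    linarith [hkey, mul_comm ‖S‖ (ν x0)]

lemma NormAxioms.equiv (h : NormAxioms ν) :
    ∃ c : ℝ, 0 < c ∧ (∀ S, ν S ≤ c * ‖S‖) ∧ (∀ S, ‖S‖ ≤ c * ν S) := by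
  obtain ⟨c1, hc1, h1⟩ := h.exists_le_norm
  obtain ⟨c2, hc2, h2⟩ := h.exists_norm_le
  refine ⟨max c1 c2, lt_of_lt_of_le hc1 (le_max_left _ _), fun S => ?_, fun S => ?_⟩
  · exact le_trans (h1 S) (mul_le_mul_of_nonneg_right (le_max_left _ _) (norm_nonneg _))
  · exact le_trans (h2 S) (mul_le_mul_of_nonneg_right (le_max_right _ _) (h.nonneg _))

end NormEquiv

/-! ### Sup norm and Kronecker products -/

section Kron
attribute [local instance] Matrix.normedAddCommGroup

variable {n ℓ : ℕ}

lemma kron_norm_le (G : Matrix (Fin ℓ) (Fin ℓ) ℝ) (X : Matrix (Fin n) (Fin n) ℝ) :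
    ‖G ⊗ₖ X‖ ≤ ‖G‖ * ‖X‖ := by
  refine (Matrix.norm_le_iff (mul_nonneg (norm_nonneg _) (norm_nonneg _))).mpr ?_
  rintro ⟨s, a⟩ ⟨t, b⟩
  have : (G ⊗ₖ X) (s, a) (t, b) = G s t * X a b := rfl
  rw [this, norm_mul]
  exact mul_le_mul (G.norm_entry_le_entrywise_sup_norm)
    (X.norm_entry_le_entrywise_sup_norm) (norm_nonneg _) (norm_nonneg _)

lemma Pstruct.norm_le_one {G : Matrix (Fin ℓ) (Fin ℓ) ℝ} (h : Pstruct G) : ‖G‖ ≤ 1 := by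
  refine (Matrix.norm_le_iff zero_le_one).mpr fun s t => ?_
  rcases h.1 s t with h0 | h0 <;> simp [h0]

lemma norm_le_kron (G : Matrix (Fin ℓ) (Fin ℓ) ℝ) (X : Matrix (Fin n) (Fin n) ℝ)
    {s t : Fin ℓ} (h : G s t = 1) : ‖X‖ ≤ ‖G ⊗ₖ X‖ := by
  refine (Matrix.norm_le_iff (norm_nonneg _)).mpr fun a b => ?_
  have hent : (G ⊗ₖ X) (s, a) (t, b) = X a b := by
    have : (G ⊗ₖ X) (s, a) (t, b) = G s t * X a b := rfl
    rw [this, h, one_mul]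
  calc ‖X a b‖ = ‖(G ⊗ₖ X) (s, a) (t, b)‖ := by rw [hent]
    _ ≤ ‖G ⊗ₖ X‖ := (G ⊗ₖ X).norm_entry_le_entrywise_sup_norm

end Kron

/-! ### limsup machinery -/

lemma tendsto_const_rpow_inv {C : ℝ} (hC : 0 < C) :
    Tendsto (fun k : ℕ => C ^ ((k : ℝ)⁻¹)) atTop (nhds 1) := by
  have h1 : Tendsto (fun k : ℕ => ((k : ℝ))⁻¹) atTop (nhds 0) :=
    tendsto_inv_atTop_zero.comp tendsto_natCast_atTop_atTop
  have h2 : Tendsto (fun k : ℕ => Real.log C * ((k : ℝ))⁻¹) atTop (nhds 0) := by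
    simpa using h1.const_mul (Real.log C)
  have h3 : Tendsto (fun k : ℕ => Real.exp (Real.log C * ((k : ℝ))⁻¹)) atTop (nhds 1) := by
    simpa [Function.comp_def] using (Real.continuous_exp.tendsto 0).comp h2
  refine h3.congr fun k => ?_
  rw [Real.rpow_def_of_pos hC]

lemma limsup_rpow_le {a b : ℕ → ℝ} {C B : ℝ} (ha : ∀ k, 0 ≤ a k) (hb : ∀ k, 0 ≤ b k)
    (hC : 1 ≤ C) (hab : ∀ k, a k ≤ C * b k)
    (hB : ∀ k, b k ^ ((k:ℝ)⁻¹) ≤ B) :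
    limsup (fun k => a k ^ ((k:ℝ)⁻¹)) atTop ≤ limsup (fun k => b k ^ ((k:ℝ)⁻¹)) atTop := by
  set L := limsup (fun k => b k ^ ((k:ℝ)⁻¹)) atTop with hL
  have hbd : IsBoundedUnder (· ≤ ·) atTop (fun k => b k ^ ((k:ℝ)⁻¹)) :=
    isBoundedUnder_of ⟨B, hB⟩
  have hcobdd : IsCoboundedUnder (· ≤ ·) atTop (fun k => b k ^ ((k:ℝ)⁻¹)) :=
    isCoboundedUnder_le_of_le _ (x := 0) fun k => Real.rpow_nonneg (hb k) _
  have hB0 : 0 ≤ B := le_trans (Real.rpow_nonneg (hb 0) _) (hB 0)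
  have hLB : L ≤ B := limsup_le_of_le hcobdd (Eventually.of_forall hB)
  have hL0 : 0 ≤ L :=
    le_limsup_of_frequently_le
      (Frequently.of_forall fun k => Real.rpow_nonneg (hb k) _) hbd
  refine le_of_forall_pos_le_add fun δ hδ => ?_
  set δ' := min 1 (δ / 2 / (B + δ / 2 + 1)) with hδ'def
  have hδ'pos : 0 < δ' := by
    apply lt_min one_pos
    positivity
  have hδ'1 : δ' ≤ 1 := min_le_left _ _
  have hkey : δ' * (B + δ / 2) ≤ δ / 2 := by
    have h2 : δ' ≤ δ / 2 / (B + δ / 2 + 1) := min_le_right _ _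
    have hpos : (0:ℝ) < B + δ / 2 + 1 := by positivity
    calc δ' * (B + δ / 2) ≤ (δ / 2 / (B + δ / 2 + 1)) * (B + δ / 2 + 1) := by
          apply mul_le_mul h2 (by linarith) (by positivity) (by positivity)
      _ = δ / 2 := by field_simp
  have hev1 : ∀ᶠ k : ℕ in atTop, C ^ ((k:ℝ)⁻¹) ≤ 1 + δ' := by
    have := tendsto_const_rpow_inv (lt_of_lt_of_le one_pos hC)
    exact this.eventually_le_const (by linarith)
  have hev2 : ∀ᶠ k : ℕ in atTop, b k ^ ((k:ℝ)⁻¹) < L + δ / 2 := by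
    refine eventually_lt_of_limsup_lt ?_ hbd
    rw [← hL]; linarith
  have hev : ∀ᶠ k : ℕ in atTop, a k ^ ((k:ℝ)⁻¹) ≤ L + δ := by
    filter_upwards [hev1, hev2] with k h1 h2
    have hstep : a k ^ ((k:ℝ)⁻¹) ≤ C ^ ((k:ℝ)⁻¹) * b k ^ ((k:ℝ)⁻¹) := by
      rw [← Real.mul_rpow (by linarith) (hb k)]
      exact Real.rpow_le_rpow (ha k) (hab k) (by positivity)
    have hb' : 0 ≤ b k ^ ((k:ℝ)⁻¹) := Real.rpow_nonneg (hb k) _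
    have hC' : 0 ≤ C ^ ((k:ℝ)⁻¹) := Real.rpow_nonneg (by linarith) _
    calc a k ^ ((k:ℝ)⁻¹) ≤ C ^ ((k:ℝ)⁻¹) * b k ^ ((k:ℝ)⁻¹) := hstep
      _ ≤ (1 + δ') * (L + δ / 2) := by
          apply mul_le_mul h1 h2.le hb' (by linarith)
      _ = L + δ / 2 + δ' * (L + δ / 2) := by ring
      _ ≤ L + δ / 2 + δ' * (B + δ / 2) := by nlinarith
      _ ≤ L + δ / 2 + δ / 2 := by linarith
      _ = L + δ := by ring
  exact limsup_le_of_le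
    (isCoboundedUnder_le_of_le _ (x := 0) fun k => Real.rpow_nonneg (ha k) _) hev

lemma rpow_inv_bound {u : ℕ → ℝ} {D M : ℝ} (hu : ∀ k, 0 ≤ u k) (hD : 0 ≤ D) (hM : 1 ≤ M)
    (h : ∀ k, u k ≤ D * M ^ k) :
    ∀ k, u k ^ ((k:ℝ)⁻¹) ≤ max 1 (max 1 D * M) := by
  intro k
  match k with
  | 0 => simp
  | (k+1) =>
      have hk : (0:ℝ) < ((k+1 : ℕ) : ℝ) := by positivity
      have hM0 : (0:ℝ) ≤ M := by linarith
      have h1 : u (k+1) ^ (((k+1 : ℕ):ℝ)⁻¹) ≤ (D * M ^ (k+1)) ^ (((k+1 : ℕ):ℝ)⁻¹) :=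
        Real.rpow_le_rpow (hu _) (h _) (by positivity)
      have h2 : (D * M ^ (k+1)) ^ (((k+1 : ℕ):ℝ)⁻¹)
          = D ^ (((k+1 : ℕ):ℝ)⁻¹) * M := by
        rw [Real.mul_rpow hD (by positivity), ← Real.rpow_natCast M (k+1),
          ← Real.rpow_mul hM0]
        congr 1
        rw [mul_inv_cancel₀ hk.ne']
        exact Real.rpow_one M
      have h3 : D ^ (((k+1 : ℕ):ℝ)⁻¹) ≤ max 1 D := by
        rcases le_total D 1 with hD1 | hD1
        · refine le_trans (Real.rpow_le_one hD hD1 (by positivity)) (le_max_left _ _)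
        · have hexp : (((k+1 : ℕ)):ℝ)⁻¹ ≤ 1 := by
            refine inv_le_one_of_one_le₀ ?_
            exact_mod_cast Nat.one_le_iff_ne_zero.mpr (Nat.succ_ne_zero k)
          calc D ^ (((k+1 : ℕ):ℝ)⁻¹) ≤ D ^ (1:ℝ) :=
                Real.rpow_le_rpow_of_exponent_le hD1 hexp
            _ = D := Real.rpow_one D
            _ ≤ max 1 D := le_max_right _ _
      calc u (k+1) ^ (((k+1 : ℕ):ℝ)⁻¹) ≤ D ^ (((k+1 : ℕ):ℝ)⁻¹) * M := h2 ▸ h1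
        _ ≤ max 1 D * M := mul_le_mul_of_nonneg_right h3 hM0
        _ ≤ max 1 (max 1 D * M) := le_max_right _ _

theorem stmt1    {n m ℓ : ℕ} (hn : 0 < n) (hm : 0 < m) (hℓ : 0 < ℓ)
    (A : Fin m → Matrix (Fin n) (Fin n) ℝ)
    (ν : Matrix (Fin n) (Fin n) ℝ → ℝ) (hν : IsSubmultNorm ν)
    (F : Fin m → Matrix (Fin ℓ) (Fin ℓ) ℝ)
    (hF01 : ∀ i s t, F i s t = 0 ∨ F i s t = 1)
    (hFcol : ∀ i t s s', F i s t ≠ 0 → F i s' t ≠ 0 → s = s')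
    (halive : ∀ t : Fin ℓ, ∃ i : Fin m, ∃ s : Fin ℓ, F i s t ≠ 0)
    (ν' : Matrix (Fin ℓ × Fin n) (Fin ℓ × Fin n) ℝ → ℝ) (hν' : IsSubmultNorm ν') :
    CJSR ν A F = JSR ν' (fun i => F i ⊗ₖ A i) := by
  letI : NormedAddCommGroup (Matrix (Fin n) (Fin n) ℝ) := Matrix.normedAddCommGroup
  letI : NormedAddCommGroup (Matrix (Fin ℓ × Fin n) (Fin ℓ × Fin n) ℝ) :=
    Matrix.normedAddCommGroup
  letI : NormedAddCommGroup (Matrix (Fin ℓ) (Fin ℓ) ℝ) := Matrix.normedAddCommGroup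
  haveI : Nonempty (Fin n) := Fin.pos_iff_nonempty.mp hn
  haveI : Nonempty (Fin m) := Fin.pos_iff_nonempty.mp hm
  haveI : Nonempty (Fin ℓ) := Fin.pos_iff_nonempty.mp hℓ
  obtain ⟨hν0, hνeq, hνsmul, hνadd, hνmul⟩ := hν
  obtain ⟨hν'0, hν'eq, hν'smul, hν'add, hν'mul⟩ := hν'
  have hax : NormAxioms ν := ⟨hν0, hνeq, hνsmul, hνadd⟩
  have hax' : NormAxioms ν' := ⟨hν'0, hν'eq, hν'smul, hν'add⟩
  obtain ⟨c, hc, hcA, hcB⟩ := hax.equiv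
  obtain ⟨c', hc', hcA', hcB'⟩ := hax'.equiv
  have hPF : ∀ i, Pstruct (F i) := fun i => ⟨hF01 i, hFcol i⟩
  set Φ : Fin m → Matrix (Fin ℓ × Fin n) (Fin ℓ × Fin n) ℝ := fun i => F i ⊗ₖ A i with hΦdef
  set C := max (c * c') 1 with hCdef
  have hC1 : (1:ℝ) ≤ C := le_max_right _ _
  -- pointwise comparisons
  have comp1 : ∀ {k : ℕ} (σ : Fin k → Fin m), wordProd F σ ≠ 0 →
      ν (wordProd A σ) ≤ C * ν' (wordProd Φ σ) := by
    intro k σ hσ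
    have hentry : ∃ s t, wordProd F σ s t ≠ 0 := by
      by_contra h
      push_neg at h
      exact hσ (by ext s t; simpa using h s t)
    obtain ⟨s, t, hst⟩ := hentry
    have h1 : wordProd F σ s t = 1 := ((Pstruct_wordProd hPF σ).1 s t).resolve_left hst
    calc ν (wordProd A σ) ≤ c * ‖wordProd A σ‖ := hcA _
      _ ≤ c * ‖wordProd F σ ⊗ₖ wordProd A σ‖ :=
          mul_le_mul_of_nonneg_left (norm_le_kron _ _ h1) hc.le
      _ ≤ c * (c' * ν' (wordProd F σ ⊗ₖ wordProd A σ)) :=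
          mul_le_mul_of_nonneg_left (hcB' _) hc.le
      _ = (c * c') * ν' (wordProd Φ σ) := by rw [wordProd_kron]; ring
      _ ≤ C * ν' (wordProd Φ σ) :=
          mul_le_mul_of_nonneg_right (le_max_left _ _) (hν'0 _)
  have comp2 : ∀ {k : ℕ} (σ : Fin k → Fin m),
      ν' (wordProd Φ σ) ≤ C * ν (wordProd A σ) := by
    intro k σ
    calc ν' (wordProd Φ σ) ≤ c' * ‖wordProd Φ σ‖ := hcA' _
      _ = c' * ‖wordProd F σ ⊗ₖ wordProd A σ‖ := by rw [wordProd_kron]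
      _ ≤ c' * (‖wordProd F σ‖ * ‖wordProd A σ‖) :=
          mul_le_mul_of_nonneg_left (kron_norm_le _ _) hc'.le
      _ ≤ c' * (1 * ‖wordProd A σ‖) := by
          apply mul_le_mul_of_nonneg_left _ hc'.le
          exact mul_le_mul_of_nonneg_right (Pstruct_wordProd hPF σ).norm_le_one (norm_nonneg _)
      _ = c' * ‖wordProd A σ‖ := by ring
      _ ≤ c' * (c * ν (wordProd A σ)) := mul_le_mul_of_nonneg_left (hcB _) hc'.le
      _ = (c * c') * ν (wordProd A σ) := by ring
      _ ≤ C * ν (wordProd A σ) :=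
          mul_le_mul_of_nonneg_right (le_max_left _ _) (hν0 _)
  -- the two sequences of suprema
  set a : ℕ → ℝ := fun k =>
    ⨆ σ : {σ : Fin k → Fin m // wordProd F σ ≠ 0}, ν (wordProd A σ.1) with hadef
  set b : ℕ → ℝ := fun k => ⨆ σ : Fin k → Fin m, ν' (wordProd Φ σ) with hbdef
  haveI hNe : ∀ k, Nonempty {σ : Fin k → Fin m // wordProd F σ ≠ 0} := fun k =>
    nonempty_subtype.mpr (exists_accepted hℓ hPF halive k)
  have hBddA : ∀ k : ℕ, BddAbove (Set.range fun σ : {σ : Fin k → Fin m // wordProd F σ ≠ 0} =>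
      ν (wordProd A σ.1)) := fun k => (Set.finite_range _).bddAbove
  have hBddB : ∀ k : ℕ, BddAbove (Set.range fun σ : Fin k → Fin m =>
      ν' (wordProd Φ σ)) := fun k => (Set.finite_range _).bddAbove
  have ha0 : ∀ k, 0 ≤ a k := by
    intro k
    obtain ⟨σ⟩ := hNe k
    exact le_trans (hν0 _) (le_ciSup (hBddA k) σ)
  have hb0 : ∀ k, 0 ≤ b k := by
    intro k
    obtain ⟨σ⟩ := (inferInstance : Nonempty (Fin k → Fin m))
    exact le_trans (hν'0 _) (le_ciSup (hBddB k) σ)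
  have hab : ∀ k, a k ≤ C * b k := by
    intro k
    refine ciSup_le fun σ => ?_
    calc ν (wordProd A σ.1) ≤ C * ν' (wordProd Φ σ.1) := comp1 σ.1 σ.2
      _ ≤ C * b k := mul_le_mul_of_nonneg_left (le_ciSup (hBddB k) σ.1)
          (le_trans zero_le_one hC1)
  have hba : ∀ k, b k ≤ C * a k := by
    intro k
    refine ciSup_le fun σ => ?_
    by_cases hσ : wordProd F σ = 0
    · have : wordProd Φ σ = 0 := by
        rw [wordProd_kron, hσ, Matrix.zero_kronecker]
      rw [this, (hν'eq 0).mpr rfl]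
      exact mul_nonneg (le_trans zero_le_one hC1) (ha0 k)
    · calc ν' (wordProd Φ σ) ≤ C * ν (wordProd A σ) := comp2 σ
        _ ≤ C * a k := mul_le_mul_of_nonneg_left
            (le_ciSup (hBddA k) ⟨σ, hσ⟩) (le_trans zero_le_one hC1)
  -- growth bounds
  set M := 1 + ∑ i, ν' (Φ i) with hMdef
  have hM1 : (1:ℝ) ≤ M := by
    have : (0:ℝ) ≤ ∑ i, ν' (Φ i) := Finset.sum_nonneg fun i _ => hν'0 _
    simp only [hMdef]; linarith
  have hbgrow : ∀ k, b k ≤ ν' 1 * M ^ k := by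
    intro k
    exact ciSup_le fun σ => wordProd_growth ν' hν'0 hν'mul Φ σ
  have hagrow : ∀ k, a k ≤ (C * ν' 1) * M ^ k := by
    intro k
    calc a k ≤ C * b k := hab k
      _ ≤ C * (ν' 1 * M ^ k) := mul_le_mul_of_nonneg_left (hbgrow k)
          (le_trans zero_le_one hC1)
      _ = (C * ν' 1) * M ^ k := by ring
  have hD : (0:ℝ) ≤ ν' 1 := hν'0 _
  have hD' : (0:ℝ) ≤ C * ν' 1 := mul_nonneg (le_trans zero_le_one hC1) hD
  have hbB := rpow_inv_bound hb0 hD hM1 hbgrow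
  have haB := rpow_inv_bound ha0 hD' hM1 hagrow
  rw [CJSR, JSR]
  exact le_antisymm (limsup_rpow_le ha0 hb0 hC1 hab hbB)
    (limsup_rpow_le hb0 ha0 hC1 hba haB)

end
end

section
/- Let F ∈ ℝ^{ℓ×ℓ} have all entries in {0,1} with at most one nonzero entry in each column. Then the spectral radius of F equals 1 if and only if there exist an integer p with 1 ≤ p ≤ ℓ and an index j ∈ [ℓ] such that the (j,j) entry of F^p is nonzero. -/
open Matrix Filter Kronecker

noncomputable section

lemma aux_eval_charpoly {n : Type*} [Fintype n] [DecidableEq n] {R : Type*} [CommRing R]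
    (M : Matrix n n R) (μ : R) :
    M.charpoly.eval μ = (μ • (1 : Matrix n n R) - M).det := by
  rw [Matrix.charpoly, eval_det, Matrix.matPolyEquiv_charmatrix]
  congr 1
  ext i j
  simp [Matrix.scalar_apply, Matrix.one_apply, Matrix.diagonal_apply]

lemma aux_root_eig {n : Type*} [Fintype n] [DecidableEq n]
    (M : Matrix n n ℂ) (μ : ℂ) (h : μ ∈ M.charpoly.roots) :
    ∃ v : n → ℂ, v ≠ 0 ∧ M.mulVec v = μ • v := by
  have hroot : M.charpoly.eval μ = 0 := (Polynomial.isRoot_of_mem_roots h)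
  rw [aux_eval_charpoly] at hroot
  obtain ⟨v, hv, hMv⟩ := (Matrix.exists_mulVec_eq_zero_iff).mpr hroot
  refine ⟨v, hv, ?_⟩
  rw [Matrix.sub_mulVec, sub_eq_zero, Matrix.smul_mulVec, Matrix.one_mulVec] at hMv
  exact hMv.symm

lemma aux_pow_eig {n : Type*} [Fintype n] [DecidableEq n]
    (M : Matrix n n ℂ) (μ : ℂ) (v : n → ℂ) (h : M.mulVec v = μ • v) (k : ℕ) :
    (M ^ k).mulVec v = μ ^ k • v := by
  induction k with
  | zero => simp
  | succ k ih =>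
    rw [pow_succ', ← Matrix.mulVec_mulVec, ih, Matrix.mulVec_smul, h, smul_smul, ← pow_succ]

lemma aux_map_pow {n : Type*} [Fintype n] [DecidableEq n]
    (F : Matrix n n ℝ) (k : ℕ) :
    (F ^ k).map (Complex.ofReal ·) = (F.map (Complex.ofReal ·)) ^ k := by
  have : (Complex.ofReal ·) = ⇑Complex.ofRealHom := rfl
  rw [this]
  induction k with
  | zero => simp [Matrix.map_one]
  | succ k ih => rw [pow_succ, pow_succ, Matrix.map_mul, ih]

/-- Any complex eigenvalue of a matrix whose powers have entries bounded by 1 has modulus ≤ 1. -/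
lemma aux_abs_le_one {n : Type*} [Fintype n] [DecidableEq n]
    (M : Matrix n n ℂ) (hM : ∀ k i t, ‖(M ^ k) i t‖ ≤ 1)
    (μ : ℂ) (v : n → ℂ) (hv : v ≠ 0) (h : M.mulVec v = μ • v) :
    ‖μ‖ ≤ 1 := by
  obtain ⟨i, hi⟩ := Function.ne_iff.mp hv
  simp only [Pi.zero_apply] at hi
  set C : ℝ := ∑ t, ‖v t‖ with hC
  have hbound : ∀ k, ‖μ‖ ^ k * ‖v i‖ ≤ C := by
    intro k
    have h1 : ((M ^ k).mulVec v) i = μ ^ k * v i := by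
      rw [aux_pow_eig M μ v h k]; simp
    calc ‖μ‖ ^ k * ‖v i‖
        = ‖μ ^ k * v i‖ := by rw [norm_mul, norm_pow]
      _ = ‖∑ t, (M ^ k) i t * v t‖ := by
          rw [← h1, Matrix.mulVec, dotProduct]
      _ ≤ ∑ t, ‖(M ^ k) i t * v t‖ :=
          norm_sum_le _ _
      _ ≤ C := by
          rw [hC]
          apply Finset.sum_le_sum
          intro t _
          rw [norm_mul]
          exact mul_le_of_le_one_left (norm_nonneg _) (hM k i t)
  by_contra hgt
  push_neg at hgt
  have hvi : 0 < ‖v i‖ := norm_pos_iff.mpr hi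
  obtain ⟨k, hk⟩ := pow_unbounded_of_one_lt (C / ‖v i‖) hgt
  have := hbound k
  rw [← le_div_iff₀ hvi] at this
  exact absurd this (not_le.mpr hk)

variable {ℓ : ℕ} (F : Matrix (Fin ℓ) (Fin ℓ) ℝ)

lemma aux_pow01
    (hF01 : ∀ s t, F s t = 0 ∨ F s t = 1)
    (hFcol : ∀ t s s', F s t ≠ 0 → F s' t ≠ 0 → s = s') (k : ℕ) :
    (∀ s t, (F ^ k) s t = 0 ∨ (F ^ k) s t = 1) ∧
      (∀ t s s', (F ^ k) s t ≠ 0 → (F ^ k) s' t ≠ 0 → s = s') := by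
  induction k with
  | zero =>
    constructor
    · intro s t
      by_cases h : s = t <;> simp [Matrix.one_apply, h]
    · intro t s s' hs hs'
      simp only [pow_zero, Matrix.one_apply, ne_eq, ite_eq_right_iff, not_forall] at hs hs'
      rw [hs.1, hs'.1]
  | succ k ih =>
    have hentry : ∀ s t, (F ^ (k + 1)) s t =
        ∑ r : Fin ℓ, (F ^ k) s r * F r t := by
      intro s t
      rw [pow_succ, Matrix.mul_apply]
    have key : ∀ t, (∀ u, (F ^ (k+1)) u t = 0) ∨
        ∃ r0, ∀ u, (F ^ (k+1)) u t = (F ^ k) u r0 := by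
      intro t
      by_cases hz : ∃ r0, F r0 t ≠ 0
      · obtain ⟨r0, hr0⟩ := hz
        refine Or.inr ⟨r0, fun u => ?_⟩
        rw [hentry, Finset.sum_eq_single r0]
        · have h1 : F r0 t = 1 := (hF01 r0 t).resolve_left hr0
          rw [h1, mul_one]
        · intro r _ hr
          rcases hF01 r t with h | h
          · rw [h, mul_zero]
          · exact absurd (hFcol t r r0 (by rw [h]; norm_num) hr0) hr
        · intro h; exact absurd (Finset.mem_univ r0) h
      · push_neg at hz
        refine Or.inl fun u => ?_
        rw [hentry]
        exact Finset.sum_eq_zero fun r _ => by rw [hz r, mul_zero]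
    constructor
    · intro s t
      rcases key t with hz | ⟨r0, hr⟩
      · left; exact hz s
      · rw [hr s]; exact ih.1 s r0
    · intro t s s' hs hs'
      rcases key t with hz | ⟨r0, hr⟩
      · exact absurd (hz s) hs
      · rw [hr s] at hs; rw [hr s'] at hs'
        exact ih.2 r0 s s' hs hs'

/-- If column `t` of `F^a` is nonzero at `r0`, then `(F^(a+b)) s t = (F^b) s r0`. -/
lemma aux_colComp
    (hF01 : ∀ s t, F s t = 0 ∨ F s t = 1)
    (hFcol : ∀ t s s', F s t ≠ 0 → F s' t ≠ 0 → s = s')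
    (a b : ℕ) (t r0 : Fin ℓ) (hr0 : (F ^ a) r0 t ≠ 0) (s : Fin ℓ) :
    (F ^ (a + b)) s t = (F ^ b) s r0 := by
  have h1 : (F ^ a) r0 t = 1 := ((aux_pow01 F hF01 hFcol a).1 r0 t).resolve_left hr0
  rw [add_comm, pow_add, Matrix.mul_apply, Finset.sum_eq_single r0]
  · rw [h1, mul_one]
  · intro r _ hr
    rcases (aux_pow01 F hF01 hFcol a).1 r t with h | h
    · rw [h, mul_zero]
    · exact absurd ((aux_pow01 F hF01 hFcol a).2 t r r0 (by rw [h]; norm_num) hr0) hr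
  · intro h; exact absurd (Finset.mem_univ r0) h

/-- No diagonal nonzero in any power `1..ℓ` implies `F^ℓ = 0`. -/
lemma aux_nilp (hℓ : 0 < ℓ)
    (hF01 : ∀ s t, F s t = 0 ∨ F s t = 1)
    (hFcol : ∀ t s s', F s t ≠ 0 → F s' t ≠ 0 → s = s')
    (hnc : ∀ p : ℕ, 1 ≤ p → p ≤ ℓ → ∀ j : Fin ℓ, (F ^ p) j j = 0) :
    F ^ ℓ = 0 := by
  by_contra h
  obtain ⟨s, hs⟩ := Function.ne_iff.mp h
  obtain ⟨t, hst⟩ := Function.ne_iff.mp hs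
  simp only [Matrix.zero_apply] at hst
  -- for each i ≤ ℓ, column t of F^i is nonzero somewhere
  have hex : ∀ i : Fin (ℓ + 1), ∃ r, (F ^ (i : ℕ)) r t ≠ 0 := by
    intro i
    by_contra hz
    push_neg at hz
    apply hst
    have h2 : F ^ ℓ = F ^ ((ℓ - (i : ℕ)) + i) := by congr 1; omega
    rw [h2, pow_add, Matrix.mul_apply]
    exact Finset.sum_eq_zero fun r _ => by rw [hz r, mul_zero]
  choose g hg using hex
  have : ¬ Function.Injective g := by
    intro hinj
    have := Fintype.card_le_of_injective g hinj
    simp at this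
  rw [Function.not_injective_iff] at this
  obtain ⟨a, b, hab, hne⟩ := this
  -- wlog a < b
  wlog hlt : (a : ℕ) < (b : ℕ) generalizing a b
  · have hvne : (a : ℕ) ≠ (b : ℕ) := fun h => hne (Fin.ext h)
    exact this b a hab.symm hne.symm (by omega)
  have hcomp := aux_colComp F hF01 hFcol (a : ℕ) ((b : ℕ) - (a : ℕ)) t (g a) (hg a) (g b)
  rw [show (a : ℕ) + ((b : ℕ) - (a : ℕ)) = (b : ℕ) by omega] at hcomp
  have : (F ^ ((b : ℕ) - (a : ℕ))) (g b) (g b) ≠ 0 := by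
    rw [hab] at hcomp
    rw [← hcomp]
    exact hg b
  exact this (hnc _ (by omega) (by omega) (g b))

theorem stmt10
    {ℓ : ℕ} (hℓ : 0 < ℓ)
    (F : Matrix (Fin ℓ) (Fin ℓ) ℝ)
    (hF01 : ∀ s t, F s t = 0 ∨ F s t = 1)
    (hFcol : ∀ t s s', F s t ≠ 0 → F s' t ≠ 0 → s = s') :
    specRad F = 1 ↔ ∃ p : ℕ, 1 ≤ p ∧ p ≤ ℓ ∧ ∃ j : Fin ℓ, (F ^ p) j j ≠ 0 := by
  set M : Matrix (Fin ℓ) (Fin ℓ) ℂ := F.map (Complex.ofReal ·) with hM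
  set S := (M.charpoly.roots).toFinset with hS
  -- entries of M^k have modulus ≤ 1
  have hMk : ∀ k i t, ‖(M ^ k) i t‖ ≤ 1 := by
    intro k i t
    rw [hM, ← aux_map_pow, Matrix.map_apply]
    rw [Complex.norm_real]
    rcases (aux_pow01 F hF01 hFcol k).1 i t with h | h <;> rw [h] <;> norm_num
  constructor
  · -- specRad = 1 → cycle
    intro hspec
    by_contra hnc
    push_neg at hnc
    have hnil : F ^ ℓ = 0 := aux_nilp F hℓ hF01 hFcol hnc
    have hMnil : M ^ ℓ = 0 := by
      rw [hM, ← aux_map_pow, hnil]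
      ext i j
      simp
    -- every root is zero
    have hzero : ∀ μ ∈ S, ‖μ‖ ≤ 0 := by
      intro μ hμ
      obtain ⟨v, hv, hve⟩ := aux_root_eig M μ (Multiset.mem_toFinset.mp hμ)
      have := aux_pow_eig M μ v hve ℓ
      rw [hMnil, Matrix.zero_mulVec] at this
      obtain ⟨i, hi⟩ := Function.ne_iff.mp hv
      have : μ ^ ℓ * v i = 0 := by
        have := congrFun this.symm i
        simpa using this
      have hμ0 : μ ^ ℓ = 0 := by
        rcases mul_eq_zero.mp this with h | h
        · exact h
        · exact absurd h hi
      rw [pow_eq_zero_iff hℓ.ne'] at hμ0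
      simp [hμ0]
    have : specRad F ≤ 0 := by
      apply Real.iSup_le _ le_rfl
      intro μ
      exact Real.iSup_le (fun h => hzero μ h) le_rfl
    rw [hspec] at this
    linarith
  · rintro ⟨p, hp1, hpℓ, j, hj⟩
    -- construct the real eigenvector for eigenvalue 1
    set v : Fin ℓ → ℝ := fun s => ∑ i ∈ Finset.range p, (F ^ i) s j with hv
    have hcolid : ∀ s, (F ^ p) s j = (1 : Matrix (Fin ℓ) (Fin ℓ) ℝ) s j := by
      intro s
      by_cases hsj : s = j
      · rw [hsj]
        have := ((aux_pow01 F hF01 hFcol p).1 j j).resolve_left hj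
        rw [this, Matrix.one_apply_eq]
      · have h0 : (F ^ p) s j = 0 := by
          by_contra h
          exact hsj ((aux_pow01 F hF01 hFcol p).2 j s j h hj)
        rw [h0, Matrix.one_apply_ne hsj]
    have hFv : F.mulVec v = v := by
      funext s
      have step : ∀ i : ℕ, ∑ t, F s t * (F ^ i) t j = (F ^ (i + 1)) s j := by
        intro i
        rw [pow_succ', Matrix.mul_apply]
      calc (F.mulVec v) s = ∑ t, F s t * v t := by rw [Matrix.mulVec, dotProduct]
        _ = ∑ t, ∑ i ∈ Finset.range p, F s t * (F ^ i) t j := by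
            apply Finset.sum_congr rfl
            intro t _
            rw [hv, Finset.mul_sum]
        _ = ∑ i ∈ Finset.range p, ∑ t, F s t * (F ^ i) t j := Finset.sum_comm
        _ = ∑ i ∈ Finset.range p, (F ^ (i + 1)) s j := by
            exact Finset.sum_congr rfl fun i _ => step i
        _ = v s := by
            have e1 : ∑ i ∈ Finset.range (p + 1), (F ^ i) s j
                = (∑ i ∈ Finset.range p, (F ^ (i + 1)) s j) + (F ^ 0) s j :=
              Finset.sum_range_succ' _ _
            have e2 : ∑ i ∈ Finset.range (p + 1), (F ^ i) s j
                = (∑ i ∈ Finset.range p, (F ^ i) s j) + (F ^ p) s j :=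
              Finset.sum_range_succ _ _
            have e3 : (F ^ p) s j = (F ^ 0) s j := by
              rw [pow_zero]; exact hcolid s
            rw [hv]
            dsimp only
            linarith [e1, e2, e3]
    have hvj : (1 : ℝ) ≤ v j := by
      rw [hv]
      dsimp only
      have h0 : (F ^ 0) j j = 1 := by rw [pow_zero, Matrix.one_apply_eq]
      calc (1 : ℝ) = (F ^ 0) j j := h0.symm
        _ ≤ ∑ i ∈ Finset.range p, (F ^ i) j j := by
            apply Finset.single_le_sum (f := fun i => (F ^ i) j j)
            · intro i _
              rcases (aux_pow01 F hF01 hFcol i).1 j j with h | h <;> rw [h] <;> norm_num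
            · exact Finset.mem_range.mpr (by omega)
    -- complex eigenvector
    set w : Fin ℓ → ℂ := fun s => ((v s : ℝ) : ℂ) with hw
    have hMw : M.mulVec w = w := by
      funext s
      have := congrFun hFv s
      rw [Matrix.mulVec, dotProduct] at this ⊢
      rw [hw]
      push_cast
      rw [← this]
      push_cast
      apply Finset.sum_congr rfl
      intro t _
      rw [hM, Matrix.map_apply]
    have hw0 : w ≠ 0 := by
      intro h
      have := congrFun h j
      rw [hw] at this
      simp only [Pi.zero_apply, Complex.ofReal_eq_zero] at this
      linarith
    have hroot : (1 : ℂ) ∈ M.charpoly.roots := by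
      rw [Polynomial.mem_roots (Matrix.charpoly_monic M).ne_zero]
      rw [Polynomial.IsRoot, aux_eval_charpoly]
      rw [← Matrix.exists_mulVec_eq_zero_iff]
      refine ⟨w, hw0, ?_⟩
      rw [Matrix.sub_mulVec, Matrix.smul_mulVec, Matrix.one_mulVec, one_smul,
        hMw, sub_self]
    have h1S : (1 : ℂ) ∈ S := Multiset.mem_toFinset.mpr hroot
    -- all roots bounded by 1
    have hub : ∀ μ ∈ S, ‖μ‖ ≤ 1 := by
      intro μ hμ
      obtain ⟨u, hu, hue⟩ := aux_root_eig M μ (Multiset.mem_toFinset.mp hμ)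
      exact aux_abs_le_one M hMk μ u hu hue
    apply le_antisymm
    · apply Real.iSup_le _ zero_le_one
      intro μ
      exact Real.iSup_le (fun h => hub μ h) zero_le_one
    · have hbdd : BddAbove (Set.range fun μ : ℂ => ⨆ (_ : μ ∈ S), ‖μ‖) := by
        refine ⟨1, ?_⟩
        rintro x ⟨μ, rfl⟩
        exact Real.iSup_le (fun h => hub μ h) zero_le_one
      have : (1 : ℝ) = ⨆ (_ : (1 : ℂ) ∈ S), ‖(1 : ℂ)‖ := by
        rw [ciSup_pos h1S]; simp
      rw [specRad]
      rw [this]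
      exact le_ciSup hbdd (1 : ℂ)

end
end

section
/- Suppose the automaton ℳ is alive. Then for every integer k₀ there exist an integer k > k₀, a word σ = σ_0σ_1…σ_{k−1} ∈ [m]^k, and an index j ∈ [ℓ] such that the (j,j) entry of F_σ := F_{σ_{k−1}}⋯F_{σ_0} equals 1; that is, accepted words for which F_σ has a nonzero diagonal entry exist with arbitrarily large length. -/
open Matrix Filter Kronecker

noncomputable section

lemma wordProd_succ_aux {m : ℕ} {N : Type*} [Fintype N] [DecidableEq N]
    (A : Fin m → Matrix N N ℝ) {k : ℕ} (σ : Fin (k + 1) → Fin m) :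
    wordProd A σ = wordProd A (fun i => σ i.succ) * A (σ 0) := by
  simp [wordProd, List.ofFn_succ]

theorem stmt11
    {m ℓ : ℕ} (hm : 0 < m) (hℓ : 0 < ℓ)
    (F : Fin m → Matrix (Fin ℓ) (Fin ℓ) ℝ)
    (hF01 : ∀ i s t, F i s t = 0 ∨ F i s t = 1)
    (hFcol : ∀ i t s s', F i s t ≠ 0 → F i s' t ≠ 0 → s = s')
    (halive : ∀ t : Fin ℓ, ∃ i : Fin m, ∃ s : Fin ℓ, F i s t ≠ 0) :
    ∀ k₀ : ℕ, ∃ k : ℕ, k₀ < k ∧ ∃ σ : Fin k → Fin m, ∃ j : Fin ℓ,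
      (wordProd F σ) j j = 1 := by
  intro k₀
  -- choose transition functions
  have hchoice : ∀ t : Fin ℓ, ∃ p : Fin m × Fin ℓ, F p.1 p.2 t ≠ 0 := by
    intro t; obtain ⟨i, s, h⟩ := halive t; exact ⟨(i, s), h⟩
  choose p hp using hchoice
  set g : Fin ℓ → Fin m := fun t => (p t).1 with hg
  set f : Fin ℓ → Fin ℓ := fun t => (p t).2 with hf
  have hfg : ∀ t, F (g t) (f t) t ≠ 0 := fun t => hp t
  have hone : ∀ t, F (g t) (f t) t = 1 := by
    intro t; rcases hF01 (g t) (f t) t with h | h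
    · exact absurd h (hfg t)
    · exact h
  -- key lemma: product along chosen path has indicator entries
  have key : ∀ (k : ℕ) (t s : Fin ℓ),
      (wordProd F (fun i : Fin k => g (f^[(i : ℕ)] t))) s t
        = if s = f^[k] t then 1 else 0 := by
    intro k
    induction k with
    | zero =>
      intro t s
      simp [wordProd, Matrix.one_apply]
      exact if_congr Iff.rfl rfl rfl
    | succ k ih =>
      intro t s
      have hsucc := wordProd_succ_aux F (fun i : Fin (k + 1) => g (f^[(i : ℕ)] t))
      rw [hsucc]
      have hσs : (fun i : Fin k => g (f^[((i.succ : Fin (k+1)) : ℕ)] t))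
          = fun i : Fin k => g (f^[(i : ℕ)] (f t)) := by
        funext i
        simp [Function.iterate_succ_apply]
      simp only [Fin.val_succ, Fin.val_zero, Function.iterate_zero_apply,
        Function.iterate_succ_apply]
      simp only [Matrix.mul_apply]
      have hsum : (∑ u : Fin ℓ,
            (wordProd F fun i : Fin k => g (f^[(i : ℕ)] (f t))) s u * F (g t) u t)
          = (wordProd F fun i : Fin k => g (f^[(i : ℕ)] (f t))) s (f t) * F (g t) (f t) t := by
        apply Finset.sum_eq_single_of_mem _ (Finset.mem_univ _)
        intro u _ hu
        have h0 : F (g t) u t = 0 := by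
          by_contra h
          exact hu (hFcol (g t) t u (f t) h (hfg t))
        rw [h0, mul_zero]
      rw [hsum, hone t, mul_one, ih (f t) s]
      exact if_congr Iff.rfl rfl rfl
  -- find a cycle by pigeonhole
  set j0 : Fin ℓ := ⟨0, hℓ⟩
  obtain ⟨a, b, hne, hab⟩ := Fintype.exists_ne_map_eq_of_card_lt
    (fun n : Fin (ℓ + 1) => f^[(n : ℕ)] j0) (by simp)
  -- wlog a < b
  obtain ⟨c, d, hcd, hcycle⟩ : ∃ c d : ℕ, c < d ∧ f^[c] j0 = f^[d] j0 := by
    rcases lt_or_gt_of_ne hne with h | h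
    · exact ⟨a, b, h, hab⟩
    · exact ⟨b, a, h, hab.symm⟩
  set t : Fin ℓ := f^[c] j0 with ht
  set q : ℕ := d - c with hq
  have hq0 : 0 < q := Nat.sub_pos_of_lt hcd
  have hcyc : f^[q] t = t := by
    have : f^[q] (f^[c] j0) = f^[q + c] j0 := (Function.iterate_add_apply f q c j0).symm
    rw [ht, this, hq, Nat.sub_add_cancel hcd.le, ← hcycle]
  have hcycn : ∀ n : ℕ, f^[n * q] t = t := by
    intro n
    induction n with
    | zero => simp
    | succ n ih =>
      rw [Nat.succ_mul, Function.iterate_add_apply, hcyc, ih]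
  refine ⟨(k₀ + 1) * q, ?_, fun i : Fin ((k₀ + 1) * q) => g (f^[(i : ℕ)] t), t, ?_⟩
  · calc k₀ < k₀ + 1 := Nat.lt_succ_self _
      _ = (k₀ + 1) * 1 := (mul_one _).symm
      _ ≤ (k₀ + 1) * q := Nat.mul_le_mul_left _ hq0
  · rw [key ((k₀ + 1) * q) t t, hcycn (k₀ + 1)]
    simp

end
end
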